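/- For the map g(x) = (1+x)²/4 with x_n = g^n(0), the quantity 1 − x_n is asymptotically comparable to c/n for some constant c > 0; in particular there exists c > 0 and N such that 1 − x_n ≥ c/n for all n ≥ N. -/
import Mathlib

lemma key_aux (g : ℝ → ℝ) (hg : ∀ x, g x = (1 + x) ^ 2 / 4) :
    ∀ n : ℕ, 0 ≤ g^[n] 0 ∧ g^[n] 0 ≤ 1 ∧ 1 - g^[n] 0 ≥ 2 / ((n : ℝ) + 2) := by
  intro n
  induction n with
  | zero => norm_num
  | succ n ih =>
    obtain ⟨hx0, hx1, hy⟩ := ih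
    set x := g^[n] 0 with hxdef
    rw [Function.iterate_succ_apply', hg]
    have hm : (0 : ℝ) ≤ n := Nat.cast_nonneg n
    have hm2 : (0 : ℝ) < (n : ℝ) + 2 := by linarith
    have hy' : (1 - x) * ((n : ℝ) + 2) ≥ 2 := by
      rw [ge_iff_le, div_le_iff₀ hm2] at hy; linarith
    refine ⟨by positivity, by nlinarith, ?_⟩
    have hm3 : (0 : ℝ) < (n : ℝ) + 1 + 2 := by linarith
    rw [ge_iff_le, div_le_iff₀ (by push_cast; linarith)]
    push_cast
    nlinarith [sq_nonneg (1 - x), sq_nonneg x, mul_nonneg hm hx0,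
      mul_nonneg (mul_nonneg hm hm) hx0, sq_nonneg ((1-x)*((n:ℝ)+2) - 2)]

/-- For `g x = (1+x)^2/4` and `x_n = g^[n] 0`, there are `c > 0` and `N` with
`1 - x_n ≥ c / n` for all `n ≥ N`. -/
theorem stmt_1 (g : ℝ → ℝ) (hg : ∀ x, g x = (1 + x) ^ 2 / 4) :
    ∃ c > (0 : ℝ), ∃ N : ℕ, ∀ n ≥ N, 1 - g^[n] 0 ≥ c / n := by
  refine ⟨2/3, by norm_num, 1, fun n hn => ?_⟩
  obtain ⟨_, _, hy⟩ := key_aux g hg n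
  have hn1 : (1 : ℝ) ≤ n := by exact_mod_cast hn
  have hnpos : (0 : ℝ) < n := by linarith
  have : (2:ℝ)/3 / n ≤ 2 / ((n : ℝ) + 2) := by
    rw [div_div, div_le_div_iff₀ (by positivity) (by linarith)]
    linarith
  linarith
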